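/- Let z_1,...,z_k be complex numbers with |z_i| ≤ 1 for all i, let a_1,...,a_k be complex numbers, and define S_m = Σ_{i=1}^k a_i z_i^m for every nonnegative integer m. Suppose S_m = δ_{m,k-1} for 0 ≤ m ≤ k-1 (i.e. S_m = 0 for 0 ≤ m ≤ k-2 and S_{k-1} = 1). Then for every nonnegative integer m, |S_m| ≤ α^{m-k+1}, where α = 1/(2^{1/k} - 1). -/

import Mathlib

open Polynomial Finset

lemma mprod_le_one (t : Multiset ℝ) (h0 : ∀ x ∈ t, 0 ≤ x) (h1 : ∀ x ∈ t, x ≤ 1) :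
    t.prod ≤ 1 := by
  induction t using Multiset.induction_on with
  | empty => simp
  | cons a s ih =>
    rw [Multiset.prod_cons]
    have hs0 : ∀ x ∈ s, (0:ℝ) ≤ x := fun x hx => h0 x (Multiset.mem_cons_of_mem hx)
    exact mul_le_one₀ (h1 a (Multiset.mem_cons_self a s))
      (Multiset.prod_nonneg hs0)
      (ih hs0 (fun x hx => h1 x (Multiset.mem_cons_of_mem hx)))

lemma esymm_abs_le (s : Multiset ℂ) (hs : ∀ x ∈ s, ‖x‖ ≤ 1) (n : ℕ) :
    ‖s.esymm n‖ ≤ ((Multiset.card s).choose n : ℝ) := by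
  rw [Multiset.esymm]
  calc ‖(((s.powersetCard n).map Multiset.prod).sum)‖
      ≤ (((s.powersetCard n).map Multiset.prod).map norm).sum :=
        norm_multiset_sum_le _
    _ ≤ Multiset.card (((s.powersetCard n).map Multiset.prod).map norm) • (1:ℝ) := by
        apply Multiset.sum_le_card_nsmul
        intro x hx
        simp only [Multiset.mem_map] at hx
        obtain ⟨y, hy, rfl⟩ := hx
        obtain ⟨t, ht, rfl⟩ := hy
        rw [show ‖t.prod‖ = (t.map normHom).prod from map_multiset_prod normHom t]
        apply mprod_le_one
        · intro u hu
          obtain ⟨v, hv, rfl⟩ := Multiset.mem_map.mp hu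
          exact norm_nonneg (v : ℂ)
        · intro u hu
          obtain ⟨v, hv, rfl⟩ := Multiset.mem_map.mp hu
          exact hs v (Multiset.mem_of_le (Multiset.mem_powersetCard.mp ht).1 hv)
    _ ≤ _ := by
        simp [Multiset.card_powersetCard]

/-- **Estimate (2) of the paper.** Let `|z_i| ≤ 1` and let `S_m = Σ_{i=1}^k a_i z_i^m`
satisfy `S_m = δ_{m,k-1}` for `0 ≤ m ≤ k-1`. Then `|S_m| ≤ α^{m-k+1}` for every
`m ≥ 0`, where `α = 1/(2^{1/k} - 1)`. -/
theorem power_sum_estimate (k : ℕ) (hk : 1 ≤ k)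
    (z a : Fin k → ℂ) (hz : ∀ i, ‖z i‖ ≤ 1)
    (S : ℕ → ℂ) (hS : ∀ m : ℕ, S m = ∑ i, a i * z i ^ m)
    (hinit : ∀ m : ℕ, m ≤ k - 1 → S m = if m = k - 1 then 1 else 0)
    (α : ℝ) (hα : α = 1 / (2 ^ ((1 : ℝ) / k) - 1)) :
    ∀ m : ℕ, ‖S m‖ ≤ α ^ ((m : ℤ) - k + 1) := by
  have hk0 : (0:ℝ) < (k:ℝ) := by exact_mod_cast hk
  have h2gt : (1:ℝ) < 2 ^ ((1:ℝ)/k) := by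
    refine (Real.one_lt_rpow_iff_of_pos (by norm_num)).mpr (Or.inl ⟨by norm_num, by positivity⟩)
  have hαpos : 0 < α := by
    rw [hα]; exact one_div_pos.mpr (sub_pos.mpr h2gt)
  have hαinv : α⁻¹ = 2 ^ ((1:ℝ)/k) - 1 := by
    rw [hα, one_div, inv_inv]
  have hbinom : (1 + α⁻¹) ^ k = 2 := by
    rw [hαinv]
    have h1 : (1:ℝ) + (2 ^ ((1:ℝ)/k) - 1) = 2 ^ ((1:ℝ)/k) := by ring
    rw [h1, ← Real.rpow_natCast ((2:ℝ) ^ ((1:ℝ)/k)) k, ← Real.rpow_mul (by norm_num)]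
    rw [one_div, inv_mul_cancel₀ (ne_of_gt hk0), Real.rpow_one]
  -- the characteristic polynomial
  set P : Polynomial ℂ := ∏ i, (X - C (z i)) with hP
  have hPmon : ∀ i ∈ (Finset.univ : Finset (Fin k)), (X - C (z i)).Monic :=
    fun i _ => monic_X_sub_C (z i)
  have hPm : P.Monic := monic_prod_of_monic _ _ hPmon
  have hPdeg : P.natDegree = k := by
    rw [hP, natDegree_prod_of_monic _ _ hPmon]
    simp [natDegree_X_sub_C]
  set c : ℕ → ℂ := fun j => P.coeff j with hc
  have hck : c k = 1 := by
    have h := hPm.coeff_natDegree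
    rw [hPdeg] at h
    exact h
  have hroot : ∀ i, (z i) ^ k = - ∑ j ∈ Finset.range k, c j * (z i) ^ j := by
    intro i
    have h0 : P.eval (z i) = 0 := by
      rw [hP, eval_prod]
      exact Finset.prod_eq_zero (Finset.mem_univ i) (by simp)
    rw [eval_eq_sum_range, hPdeg, Finset.sum_range_succ,
      show P.coeff k = (1:ℂ) from hck, one_mul] at h0
    simp only [hc]
    linear_combination h0
  have hcb : ∀ j, j < k → ‖c j‖ ≤ (k.choose j : ℝ) := by
    intro j hj
    have hPmult : P = ((Finset.univ.val.map z).map (fun t => X - C t)).prod := by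
      rw [hP, Finset.prod, Multiset.map_map]
      rfl
    have hcard : Multiset.card (Finset.univ.val.map z) = k := by simp
    have hco := Multiset.prod_X_sub_C_coeff (Finset.univ.val.map z) (k := j)
      (by rw [hcard]; omega)
    rw [hcard] at hco
    have : c j = (-1) ^ (k - j) * (Finset.univ.val.map z).esymm (k - j) := by
      rw [hc]; simp only [hPmult, hco]
    rw [this, norm_mul, norm_pow, norm_neg, norm_one, one_pow, one_mul]
    have he := esymm_abs_le (Finset.univ.val.map z)
      (by intro x hx; obtain ⟨i, _, rfl⟩ := Multiset.mem_map.mp hx; exact hz i) (k - j)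
    rw [hcard] at he
    calc ‖(Finset.univ.val.map z).esymm (k - j)‖ ≤ (k.choose (k-j) : ℝ) := he
      _ = (k.choose j : ℝ) := by exact_mod_cast Nat.choose_symm hj.le
  have hrec : ∀ n, S (n + k) = - ∑ j ∈ Finset.range k, c j * S (n + j) := by
    intro n
    have key : (∑ i, a i * z i ^ (n+k)) + ∑ j ∈ Finset.range k, c j * S (n+j) = 0 := by
      have e1 : ∀ j ∈ Finset.range k, c j * S (n + j) = ∑ i, c j * (a i * z i ^ (n + j)) := by
        intro j _; rw [hS, Finset.mul_sum]
      rw [Finset.sum_congr rfl e1, Finset.sum_comm, ← Finset.sum_add_distrib]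
      apply Finset.sum_eq_zero
      intro i _
      have e2 : ∀ j ∈ Finset.range k, c j * (a i * z i ^ (n + j))
          = (a i * z i ^ n) * (c j * z i ^ j) := by
        intro j _; rw [pow_add]; ring
      rw [Finset.sum_congr rfl e2, ← Finset.mul_sum, pow_add]
      rw [show z i ^ n * z i ^ k = z i ^ n * (z i ^ k) from rfl, hroot i]
      ring
    rw [hS]
    linear_combination key
  have hbsum : ∑ j ∈ Finset.range k, (k.choose j : ℝ) * (α⁻¹) ^ (k - j) = 1 := by
    have hb := add_pow (1:ℝ) α⁻¹ k
    rw [hbinom, Finset.sum_range_succ] at hb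
    simp only [one_pow, one_mul, Nat.sub_self, pow_zero, Nat.choose_self, Nat.cast_one,
      mul_one] at hb
    have : ∑ j ∈ Finset.range k, (k.choose j : ℝ) * (α⁻¹) ^ (k - j)
        = ∑ j ∈ Finset.range k, α⁻¹ ^ (k - j) * (k.choose j : ℝ) :=
      Finset.sum_congr rfl (fun j _ => by ring)
    rw [this]
    linarith [hb]
  intro m
  induction m using Nat.strong_induction_on with
  | _ m ih =>
  by_cases hm : m ≤ k - 1
  · rw [hinit m hm]
    by_cases he : m = k - 1
    · rw [if_pos he, norm_one]
      have hz0 : ((m:ℤ) - k + 1) = 0 := by omega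
      rw [hz0, zpow_zero]
    · rw [if_neg he, norm_zero]
      exact zpow_nonneg hαpos.le _
  · push_neg at hm
    obtain ⟨n, rfl⟩ : ∃ n, m = n + k := ⟨m - k, by omega⟩
    rw [hrec n, norm_neg]
    calc ‖∑ j ∈ Finset.range k, c j * S (n + j)‖
        ≤ ∑ j ∈ Finset.range k, ‖c j * S (n+j)‖ :=
          norm_sum_le _ _
      _ ≤ ∑ j ∈ Finset.range k, (k.choose j : ℝ) * α ^ ((n:ℤ) + j - k + 1) := by
          apply Finset.sum_le_sum
          intro j hj
          rw [norm_mul]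
          have hih := ih (n + j) (by have := Finset.mem_range.mp hj; omega)
          have : ((n + j : ℕ) : ℤ) - k + 1 = (n:ℤ) + j - k + 1 := by push_cast; ring
          rw [this] at hih
          exact mul_le_mul (hcb j (Finset.mem_range.mp hj)) hih
            (norm_nonneg _) (Nat.cast_nonneg _)
      _ = α ^ ((n:ℤ) + 1) * ∑ j ∈ Finset.range k, (k.choose j : ℝ) * (α⁻¹) ^ (k - j) := by
          rw [Finset.mul_sum]
          apply Finset.sum_congr rfl
          intro j hj
          have hjk := Finset.mem_range.mp hj
          have h1 : (n:ℤ) + j - k + 1 = ((n:ℤ) + 1) + (-(((k - j : ℕ)):ℤ)) := by omega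
          rw [h1, zpow_add₀ hαpos.ne', zpow_neg, zpow_natCast, ← inv_pow]
          ring
      _ = α ^ ((n:ℤ) + 1) := by rw [hbsum, mul_one]
      _ = α ^ (((n + k : ℕ):ℤ) - k + 1) := by
          congr 1
          omega
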